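/- Let H ∈ ℝ^{n×n} be symmetric with eigendecomposition H = QΛQᵀ, where Q is orthogonal and Λ = diag(λ₁, …, λₙ), and suppose 0 < μ ≤ |λᵢ| ≤ L for all i. For ε > 0, define the spectral preconditioner M = Q diag(|λ₁| + ε, …, |λₙ| + ε) Qᵀ. Then: (i) M is symmetric positive definite; (ii) the generalized eigenvalues of (H, M) are exactly σᵢ = λᵢ/(|λᵢ| + ε) with the same eigenvectors, and each σᵢ ∈ (−1, 1); (iii) the preconditioned condition number satisfies κ_M := max_i |σᵢ| / min_i |σᵢ| ≤ (1 + ε/μ)/(1 + ε/L). -/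

import Mathlib

open Matrix

/-- Let `H = QΛQᵀ` be symmetric with `Q` orthogonal,
`Λ = diag(λ₁, …, λₙ)` and `0 < μ ≤ |λᵢ| ≤ L`. For `ε > 0`, the spectral
preconditioner `M = Q diag(|λ₁| + ε, …, |λₙ| + ε) Qᵀ` satisfies:
(i) `M` is SPD; (ii) the generalized eigenvalues of `(H, M)` are exactly
`σᵢ = λᵢ/(|λᵢ| + ε)` with the same eigenvectors (the columns of `Q`), and each
`σᵢ ∈ (−1, 1)`; (iii) `κ_M = max |σᵢ| / min |σᵢ| ≤ (1 + ε/μ)/(1 + ε/L)`. -/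
theorem spectral_preconditioner
    (n : ℕ) (hn : 0 < n)
    (H Q M : Matrix (Fin n) (Fin n) ℝ) (lam : Fin n → ℝ)
    (hQ : Qᵀ * Q = 1)
    (hHdef : H = Q * Matrix.diagonal lam * Qᵀ)
    (μ L : ℝ) (hμ : 0 < μ) (hμL : μ ≤ L)
    (hbound : ∀ i, μ ≤ |lam i| ∧ |lam i| ≤ L)
    (ε : ℝ) (hε : 0 < ε)
    (hMdef : M = Q * Matrix.diagonal (fun i => |lam i| + ε) * Qᵀ) :
    M.PosDef ∧
    (∀ i : Fin n,
        H *ᵥ (fun r => Q r i) = (lam i / (|lam i| + ε)) • (M *ᵥ (fun r => Q r i)) ∧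
        lam i / (|lam i| + ε) ∈ Set.Ioo (-1 : ℝ) 1) ∧
    (∀ t : ℝ, (H - t • M).det = 0 ↔ ∃ i : Fin n, t = lam i / (|lam i| + ε)) ∧
    (Finset.univ.sup' (Finset.univ_nonempty_iff.mpr ⟨⟨0, hn⟩⟩)
          (fun i => |lam i / (|lam i| + ε)|)
        / Finset.univ.inf' (Finset.univ_nonempty_iff.mpr ⟨⟨0, hn⟩⟩)
          (fun i => |lam i / (|lam i| + ε)|)
      ≤ (1 + ε / μ) / (1 + ε / L)) := by
  have hQQ : Q * Qᵀ = 1 := mul_eq_one_comm.mp hQ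
  set c : Fin n → ℝ := fun i => |lam i| + ε with hc
  have hcpos : ∀ i, 0 < c i := fun i =>
    add_pos_of_nonneg_of_pos (abs_nonneg _) hε
  have hcne : ∀ i, c i ≠ 0 := fun i => (hcpos i).ne'
  -- key eigen computation
  have key : ∀ (d : Fin n → ℝ) (i : Fin n),
      (Q * Matrix.diagonal d * Qᵀ) *ᵥ (fun r => Q r i) = fun r => d i * Q r i := by
    intro d i
    have h1 : Qᵀ *ᵥ (fun r => Q r i) = Pi.single i (1 : ℝ) := by
      funext j
      have h := congrFun (congrFun hQ j) i
      simpa [Matrix.mul_apply, Matrix.mulVec, dotProduct, Matrix.one_apply,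
        Pi.single_apply] using h
    rw [← Matrix.mulVec_mulVec, ← Matrix.mulVec_mulVec, h1,
      Matrix.diagonal_mulVec_single, Matrix.mulVec_single]
    funext r
    simp [Pi.smul_apply, op_smul_eq_mul, Matrix.col_apply, mul_comm]
  constructor
  · -- PosDef
    rw [Matrix.posDef_iff_dotProduct_mulVec]
    constructor
    · -- Hermitian
      rw [hMdef, ← Matrix.conjTranspose_eq_transpose_of_trivial Q]
      exact Matrix.isHermitian_mul_mul_conjTranspose Q (Matrix.isHermitian_diagonal c)
    · intro x hx
      have hy : Qᵀ *ᵥ x ≠ 0 := by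
        intro h
        apply hx
        have h2 : Q *ᵥ (Qᵀ *ᵥ x) = x := by
          rw [Matrix.mulVec_mulVec, hQQ, Matrix.one_mulVec]
        rw [h, Matrix.mulVec_zero] at h2
        exact h2.symm
      have hD := (Matrix.PosDef.diagonal hcpos).dotProduct_mulVec_pos hy
      have hdp : ∀ v : Fin n → ℝ, x ⬝ᵥ (Q *ᵥ v) = (Qᵀ *ᵥ x) ⬝ᵥ v := by
        intro v
        rw [Matrix.dotProduct_mulVec]
        congr 1
        rw [Matrix.mulVec_transpose]
      have heq : dotProduct (star x) (M *ᵥ x)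
          = dotProduct (star (Qᵀ *ᵥ x)) (Matrix.diagonal c *ᵥ (Qᵀ *ᵥ x)) := by
        rw [hMdef, star_trivial, star_trivial, ← Matrix.mulVec_mulVec,
          ← Matrix.mulVec_mulVec, hdp]
      rw [heq]
      exact hD
  refine ⟨?_, ?_, ?_⟩
  · intro i
    constructor
    · rw [hHdef, hMdef, key, key]
      funext r
      simp only [Pi.smul_apply, smul_eq_mul]
      field_simp
      ring
    · have h1 : |lam i| < c i := by simp [hc]; linarith
      have : |lam i / c i| < 1 := by
        rw [abs_div, abs_of_pos (hcpos i)]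
        rw [div_lt_one (hcpos i)]
        exact h1
      exact abs_lt.mp this
  · intro t
    have hfac : H - t • M = Q * Matrix.diagonal (fun i => lam i - t * c i) * Qᵀ := by
      rw [hHdef, hMdef,
        show t • (Q * Matrix.diagonal c * Qᵀ) = Q * (t • Matrix.diagonal c) * Qᵀ from by
          rw [Matrix.mul_smul, Matrix.smul_mul],
        ← Matrix.sub_mul, ← Matrix.mul_sub, ← Matrix.diagonal_smul, ← Matrix.diagonal_sub]
      congr 2
    have hdetQ : Q.det * Qᵀ.det = 1 := by
      have h := congrArg Matrix.det hQ
      rw [Matrix.det_mul, Matrix.det_one] at h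
      linarith [mul_comm Q.det Qᵀ.det ▸ h]
    rw [hfac, Matrix.det_mul, Matrix.det_mul,
      show Q.det * (Matrix.diagonal fun i => lam i - t * c i).det * Qᵀ.det
        = (Matrix.diagonal fun i => lam i - t * c i).det * (Q.det * Qᵀ.det) from by ring,
      hdetQ, mul_one, Matrix.det_diagonal, Finset.prod_eq_zero_iff]
    constructor
    · rintro ⟨i, -, hi⟩
      refine ⟨i, ?_⟩
      rw [eq_div_iff (hcne i)]
      linarith
    · rintro ⟨i, hi⟩
      refine ⟨i, Finset.mem_univ i, ?_⟩
      rw [hi, div_mul_cancel₀ _ (hcne i), sub_self]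
  · have habs : ∀ i, |lam i / c i| = |lam i| / c i := fun i => by
      rw [abs_div, abs_of_pos (hcpos i)]
    have hsup : Finset.univ.sup' (Finset.univ_nonempty_iff.mpr ⟨⟨0, hn⟩⟩)
        (fun i => |lam i / c i|) ≤ L / (L + ε) := by
      apply Finset.sup'_le
      intro i _
      rw [habs i]
      rw [div_le_div_iff₀ (hcpos i) (by linarith)]
      have h1 := (hbound i).1
      have h2 := (hbound i).2
      simp only [hc]
      nlinarith
    have hinf : μ / (μ + ε) ≤ Finset.univ.inf' (Finset.univ_nonempty_iff.mpr ⟨⟨0, hn⟩⟩)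
        (fun i => |lam i / c i|) := by
      apply Finset.le_inf'
      intro i _
      rw [habs i]
      rw [div_le_div_iff₀ (by linarith) (hcpos i)]
      have h1 := (hbound i).1
      simp only [hc]
      nlinarith
    have hL0 : (0:ℝ) < L := lt_of_lt_of_le hμ hμL
    have hsupnn : (0:ℝ) ≤ L / (L + ε) := by positivity
    have hμμε : (0:ℝ) < μ / (μ + ε) := by positivity
    calc Finset.univ.sup' (Finset.univ_nonempty_iff.mpr ⟨⟨0, hn⟩⟩)
          (fun i => |lam i / c i|)
        / Finset.univ.inf' (Finset.univ_nonempty_iff.mpr ⟨⟨0, hn⟩⟩)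
          (fun i => |lam i / c i|)
        ≤ (L / (L + ε)) / (μ / (μ + ε)) := div_le_div₀ hsupnn hsup hμμε hinf
      _ = (1 + ε / μ) / (1 + ε / L) := by
          have hL : (0:ℝ) < L := lt_of_lt_of_le hμ hμL
          field_simp
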